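/- arXiv:1103.1866 — 3 statements merged into one kernel-verified Lean document; each statement's English description precedes it below -/
import Mathlib

section
/- For all real numbers $0 < x, y < 1$, one has $x \ln(x/y) + (1-x)\ln((1-x)/(1-y)) \geq \frac{\ln((1-y)/y)}{1-2y}(x-y)^2 + \frac{1}{3}\cdot\frac{(x(1-x)-y(1-y))^2}{|x(1-x)-y(1-y)| + y(1-y)}$ (where the first term on the right is interpreted by continuity as $2(x-y)^2$ when $y = 1/2$). -/
open Real Set

lemma mono_of_hasDeriv {f f' : ℝ → ℝ} {c d : ℝ}
    (hd : ∀ x ∈ Set.Icc c d, HasDerivAt f (f' x) x)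
    (h0 : ∀ x ∈ Set.Ioo c d, 0 ≤ f' x) : MonotoneOn f (Set.Icc c d) := by
  apply monotoneOn_of_deriv_nonneg (convex_Icc c d)
  · exact fun x hx => (hd x hx).continuousAt.continuousWithinAt
  · rw [interior_Icc]
    exact fun x hx => ((hd x (Ioo_subset_Icc_self hx)).differentiableAt).differentiableWithinAt
  · rw [interior_Icc]
    intro x hx
    rw [(hd x (Ioo_subset_Icc_self hx)).deriv]
    exact h0 x hx

lemma anti_of_hasDeriv {f f' : ℝ → ℝ} {c d : ℝ}
    (hd : ∀ x ∈ Set.Icc c d, HasDerivAt f (f' x) x)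
    (h0 : ∀ x ∈ Set.Ioo c d, f' x ≤ 0) : AntitoneOn f (Set.Icc c d) := by
  apply antitoneOn_of_deriv_nonpos (convex_Icc c d)
  · exact fun x hx => (hd x hx).continuousAt.continuousWithinAt
  · rw [interior_Icc]
    exact fun x hx => ((hd x (Ioo_subset_Icc_self hx)).differentiableAt).differentiableWithinAt
  · rw [interior_Icc]
    intro x hx
    rw [(hd x (Ioo_subset_Icc_self hx)).deriv]
    exact h0 x hx

lemma log_upper {t : ℝ} (ht : 1 ≤ t) :
    Real.log t ≤ (t-1)*(t^2+10*t+1)/(6*t*(t+1)) := by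
  have key : ∀ s ∈ Set.Icc 1 t, HasDerivAt (fun u => (u-1)*(u^2+10*u+1)/(6*u*(u+1)) - Real.log u)
      ((s-1)^4/(6*s^2*(s+1)^2)) s := by
    intro s hs
    have hs0 : (0:ℝ) < s := lt_of_lt_of_le one_pos hs.1
    have hden : 6*s*(s+1) ≠ 0 := by positivity
    have h2 : HasDerivAt (fun u:ℝ => u^2+10*u+1) (2*s+10) s := by
      have h := ((hasDerivAt_pow 2 s).add ((hasDerivAt_id s).const_mul 10)).add_const 1
      refine h.congr_deriv ?_
      norm_num
    have hA : HasDerivAt (fun u:ℝ => (u-1)*(u^2+10*u+1))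
        (1*(s^2+10*s+1) + (s-1)*(2*s+10)) s :=
      ((hasDerivAt_id s).sub_const 1).mul h2
    have hB : HasDerivAt (fun u:ℝ => 6*u*(u+1)) (6*(s+1)+6*s) s := by
      have h := ((hasDerivAt_id s).const_mul 6).mul ((hasDerivAt_id s).add_const 1)
      refine h.congr_deriv ?_
      norm_num
    have h1 := (hA.div hB hden).sub (Real.hasDerivAt_log hs0.ne')
    refine h1.congr_deriv ?_
    field_simp
    ring
  have hmono := mono_of_hasDeriv key (fun s hs => by
    have h0 : (0:ℝ) < s := lt_trans one_pos hs.1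
    positivity)
  have h1 : (1:ℝ) ∈ Set.Icc 1 t := ⟨le_refl 1, ht⟩
  have h2 : t ∈ Set.Icc 1 t := ⟨ht, le_refl t⟩
  have := hmono h1 h2 ht
  norm_num [Real.log_one] at this
  linarith

lemma log_lower {t : ℝ} (ht : 1 ≤ t) :
    2*(t-1)/(t+1) ≤ Real.log t := by
  have key : ∀ s ∈ Set.Icc 1 t, HasDerivAt (fun u => Real.log u - 2*(u-1)/(u+1))
      ((s-1)^2/(s*(s+1)^2)) s := by
    intro s hs
    have hs0 : (0:ℝ) < s := lt_of_lt_of_le one_pos hs.1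
    have hden : s + 1 ≠ 0 := by positivity
    have hA : HasDerivAt (fun u:ℝ => 2*(u-1)) 2 s := by
      have h := ((hasDerivAt_id s).sub_const 1).const_mul 2
      refine h.congr_deriv ?_
      norm_num
    have hB : HasDerivAt (fun u:ℝ => u+1) 1 s := (hasDerivAt_id s).add_const 1
    have h1 := (Real.hasDerivAt_log hs0.ne').sub (hA.div hB hden)
    refine h1.congr_deriv ?_
    field_simp
    ring
  have hmono := mono_of_hasDeriv key (fun s hs => by
    have h0 : (0:ℝ) < s := lt_trans one_pos hs.1
    positivity)
  have h1 : (1:ℝ) ∈ Set.Icc 1 t := ⟨le_refl 1, ht⟩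
  have h2 : t ∈ Set.Icc 1 t := ⟨ht, le_refl t⟩
  have := hmono h1 h2 ht
  norm_num [Real.log_one] at this
  linarith
lemma pquasi {c b s m t : ℝ} (hc : 0 < c) (hs : 0 ≤ s) (hsm : s ≤ m) (hmt : m ≤ t)
    (hps : 0 ≤ -c*s^3+3*s^2+6*b^2*s-2*b^2) (hpt : 0 ≤ -c*t^3+3*t^2+6*b^2*t-2*b^2) :
    0 ≤ -c*m^3+3*m^2+6*b^2*m-2*b^2 := by
  rcases le_or_gt 0 (-3*c*m^2+6*m+6*b^2) with hm | hm
  · -- p nondecreasing up to m : p m ≥ p s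
    have hps' : 0 ≤ -3*c*s^2+6*s+6*b^2 := by
      rcases eq_or_lt_of_le (hs.trans hsm) with h0 | h0
      · have hs0 : s = 0 := le_antisymm (h0 ▸ hsm) hs
        rw [hs0]; nlinarith [sq_nonneg b]
      · nlinarith [mul_nonneg hs hm, mul_nonneg (sub_nonneg.2 hsm) (sq_nonneg b),
          mul_nonneg (mul_nonneg hc.le hs) (mul_nonneg h0.le (sub_nonneg.2 hsm))]
    nlinarith [mul_nonneg (sub_nonneg.2 hsm) hm, mul_nonneg (sub_nonneg.2 hsm) hps',
      mul_nonneg (mul_nonneg hc.le (sub_nonneg.2 hsm))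
        (mul_nonneg (sub_nonneg.2 hsm) (sub_nonneg.2 hsm))]
  · -- p decreasing from m on : p m ≥ p t
    have hmid : -3*c*((m+t)/2)^2+6*((m+t)/2)+6*b^2 < 0 := by
      by_contra hmid
      push_neg at hmid
      rcases eq_or_lt_of_le ((hs.trans hsm).trans (by linarith : m ≤ (m+t)/2)) with h0 | h0
      · -- (m+t)/2 = 0 forces m = 0 hence p'(m)=6b^2 ≥ 0, contra
        have hm0 : m = 0 := by nlinarith
        rw [hm0] at hm; nlinarith [sq_nonneg b]
      · nlinarith [mul_nonneg (hs.trans hsm) hmid,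
          mul_nonneg (by linarith : (0:ℝ) ≤ (m+t)/2 - m) (sq_nonneg b),
          mul_nonneg (mul_nonneg hc.le (hs.trans hsm))
            (mul_nonneg h0.le (by linarith : (0:ℝ) ≤ (m+t)/2 - m))]
    nlinarith [mul_nonneg (sub_nonneg.2 hmt) (le_of_lt (neg_pos.2 hmid)),
      mul_nonneg (mul_nonneg hc.le (sub_nonneg.2 hmt))
        (mul_nonneg (sub_nonneg.2 hmt) (sub_nonneg.2 hmt))]

lemma Qout {a b : ℝ} (ha : 0 < a) (hab : a ≤ b) (hb : b ≤ 1/4) :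
    1/(3*b) + 8/3 ≤ 1/a - 2/3 + 2*b^2/(3*(2*b-a)^2) - 2*b^2*(1-4*a)/(3*(2*b-a)^3) := by
  have hb0 : (0:ℝ) < b := lt_of_lt_of_le ha hab
  have hu : (0:ℝ) < 2*b - a := by linarith
  have hQ : 0 ≤ 24*b^3 - a*(22*b^2+76*b^3) + a^2*(8*b+50*b^2) - a^3*(1+10*b) := by
    have h1 : 0 ≤ b - a := by linarith
    have h2 : 0 ≤ 1 - 4*b := by linarith
    nlinarith [mul_nonneg (pow_nonneg hb0.le 3) h2,
      mul_nonneg h1 (sq_nonneg b), mul_nonneg (mul_nonneg h1 (sq_nonneg b)) hb0.le,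
      mul_nonneg (mul_nonneg h1 h1) hb0.le, mul_nonneg (mul_nonneg h1 h1) (sq_nonneg b),
      mul_nonneg (mul_nonneg h1 h1) h1, mul_nonneg (mul_nonneg (mul_nonneg h1 h1) h1) hb0.le]
  rw [← sub_nonneg]
  have expand : 1/a - 2/3 + 2*b^2/(3*(2*b-a)^2) - 2*b^2*(1-4*a)/(3*(2*b-a)^3) - (1/(3*b) + 8/3)
      = ((b-a)*(24*b^3 - a*(22*b^2+76*b^3) + a^2*(8*b+50*b^2) - a^3*(1+10*b)))
        / (3*a*b*(2*b-a)^3) := by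
    field_simp
    ring
  rw [expand]
  have : 0 ≤ (b-a)*(24*b^3 - a*(22*b^2+76*b^3) + a^2*(8*b+50*b^2) - a^3*(1+10*b)) :=
    mul_nonneg (by linarith) hQ
  positivity

noncomputable def fm (y K u : ℝ) : ℝ :=
  u*Real.log u + (1-u)*Real.log (1-u) - u*Real.log y - (1-u)*Real.log (1-y)
    - K*(u-y)^2 - (u*(1-u) - y*(1-y))^2/(3*(u*(1-u)))

noncomputable def gm (y K u : ℝ) : ℝ :=
  Real.log u - Real.log (1-u) - Real.log y + Real.log (1-y) - 2*K*(u-y)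
    - (1-2*u)*((u*(1-u))^2-(y*(1-y))^2)/(3*(u*(1-u))^2)

noncomputable def fo (y K u : ℝ) : ℝ :=
  u*Real.log u + (1-u)*Real.log (1-u) - u*Real.log y - (1-u)*Real.log (1-y)
    - K*(u-y)^2 - (u*(1-u) - y*(1-y))^2/(3*(2*(y*(1-y)) - u*(1-u)))

noncomputable def go (y K u : ℝ) : ℝ :=
  Real.log u - Real.log (1-u) - Real.log y + Real.log (1-y) - 2*K*(u-y)
    - (1-2*u)*((y*(1-y))^2-(2*(y*(1-y))-u*(1-u))^2)/(3*(2*(y*(1-y))-u*(1-u))^2)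

lemma hasDerivAt_A (x : ℝ) : HasDerivAt (fun u : ℝ => u*(1-u)) (1-2*x) x := by
  have h := (hasDerivAt_id x).mul ((hasDerivAt_id x).const_sub 1)
  refine h.congr_deriv ?_
  try simp only [id_eq]
  ring

lemma hasDerivAt_one_sub_two (x : ℝ) : HasDerivAt (fun u : ℝ => 1-2*u) (-2 : ℝ) x := by
  have h := ((hasDerivAt_id x).const_mul 2).const_sub 1
  refine h.congr_deriv ?_
  try simp only [id_eq]
  ring

lemma hasDerivAt_xlogx {x : ℝ} (hx0 : 0 < x) :
    HasDerivAt (fun u : ℝ => u*Real.log u) (Real.log x + 1) x := by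
  have h := (hasDerivAt_id x).mul (Real.hasDerivAt_log hx0.ne')
  refine h.congr_deriv ?_
  simp only [id_eq]
  field_simp

lemma hasDerivAt_log_one_sub {x : ℝ} (hx1 : x < 1) :
    HasDerivAt (fun u : ℝ => Real.log (1-u)) (-(1-x)⁻¹) x := by
  have h1x : (0:ℝ) < 1 - x := by linarith
  have h := (Real.hasDerivAt_log h1x.ne').comp x ((hasDerivAt_id x).const_sub 1)
  refine h.congr_deriv ?_
  try simp only [id_eq]
  ring

lemma hasDerivAt_ylogy {x : ℝ} (hx1 : x < 1) :
    HasDerivAt (fun u : ℝ => (1-u)*Real.log (1-u)) (-Real.log (1-x) - 1) x := by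
  have h1x : (0:ℝ) < 1 - x := by linarith
  have h := ((hasDerivAt_id x).const_sub 1).mul (hasDerivAt_log_one_sub hx1)
  refine h.congr_deriv ?_
  simp only [id_eq]
  field_simp
  ring

lemma hasDerivAt_ent (y : ℝ) {x : ℝ} (hx0 : 0 < x) (hx1 : x < 1) :
    HasDerivAt (fun u : ℝ => u*Real.log u + (1-u)*Real.log (1-u) - u*Real.log y
        - (1-u)*Real.log (1-y))
      (Real.log x - Real.log (1-x) - Real.log y + Real.log (1-y)) x := by
  have h3 : HasDerivAt (fun u : ℝ => u*Real.log y) (Real.log y) x := by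
    have h := (hasDerivAt_id x).mul_const (Real.log y)
    simpa using h
  have h4 : HasDerivAt (fun u : ℝ => (1-u)*Real.log (1-y)) (-Real.log (1-y)) x := by
    have h := ((hasDerivAt_id x).const_sub 1).mul_const (Real.log (1-y))
    refine h.congr_deriv ?_
    ring
  have h := (((hasDerivAt_xlogx hx0).add (hasDerivAt_ylogy hx1)).sub h3).sub h4
  refine h.congr_deriv ?_
  ring

lemma hasDerivAt_fm (y K : ℝ) {x : ℝ} (hx0 : 0 < x) (hx1 : x < 1) :
    HasDerivAt (fm y K) (gm y K x) x := by
  have h1x : (0:ℝ) < 1 - x := by linarith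
  have hq : HasDerivAt (fun u : ℝ => K*(u-y)^2) (K*(2*(x-y))) x := by
    have h := (((hasDerivAt_id x).sub_const y).pow 2).const_mul K
    refine h.congr_deriv ?_
    simp only [id_eq]
    ring
  have hN : HasDerivAt (fun u : ℝ => (u*(1-u) - y*(1-y))^2)
      (2*(x*(1-x)-y*(1-y))*(1-2*x)) x := by
    have h := ((hasDerivAt_A x).sub_const (y*(1-y))).pow 2
    refine h.congr_deriv ?_
    ring
  have hD : HasDerivAt (fun u : ℝ => 3*(u*(1-u))) (3*(1-2*x)) x := (hasDerivAt_A x).const_mul 3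
  have hDne : 3*(x*(1-x)) ≠ 0 := by positivity
  have h := ((hasDerivAt_ent y hx0 hx1).sub hq).sub (hN.div hD hDne)
  refine h.congr_deriv ?_
  unfold gm
  field_simp
  ring

lemma hasDerivAt_gm (y K : ℝ) {x : ℝ} (hx0 : 0 < x) (hx1 : x < 1) :
    HasDerivAt (gm y K)
      ((-(6*K-2)*(x*(1-x))^3 + 3*(x*(1-x))^2 + 6*(y*(1-y))^2*(x*(1-x)) - 2*(y*(1-y))^2)
        / (3*(x*(1-x))^3)) x := by
  have h1x : (0:ℝ) < 1 - x := by linarith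
  have h12 := (Real.hasDerivAt_log hx0.ne').sub (hasDerivAt_log_one_sub hx1)
  have hlin : HasDerivAt (fun u : ℝ => 2*K*(u-y)) (2*K) x := by
    have h := ((hasDerivAt_id x).sub_const y).const_mul (2*K)
    refine h.congr_deriv ?_
    try simp only [id_eq]
    try ring
  have hN : HasDerivAt (fun u : ℝ => (1-2*u)*((u*(1-u))^2-(y*(1-y))^2))
      ((-2)*((x*(1-x))^2-(y*(1-y))^2) + (1-2*x)*(2*(x*(1-x))*(1-2*x))) x := by
    have hsq : HasDerivAt (fun u : ℝ => (u*(1-u))^2-(y*(1-y))^2)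
        (2*(x*(1-x))*(1-2*x)) x := by
      have h := ((hasDerivAt_A x).pow 2).sub_const ((y*(1-y))^2)
      refine h.congr_deriv ?_
      ring
    exact (hasDerivAt_one_sub_two x).mul hsq
  have hD : HasDerivAt (fun u : ℝ => 3*(u*(1-u))^2) (3*(2*(x*(1-x))*(1-2*x))) x := by
    have h := ((hasDerivAt_A x).pow 2).const_mul 3
    refine h.congr_deriv ?_
    ring
  have hDne : 3*(x*(1-x))^2 ≠ 0 := by positivity
  have h := (((h12.sub_const (Real.log y)).add_const (Real.log (1-y))).sub hlin).sub
    (hN.div hD hDne)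
  refine h.congr_deriv ?_
  field_simp
  ring

lemma hasDerivAt_fo (y K : ℝ) {x : ℝ} (hx0 : 0 < x) (hx1 : x < 1)
    (hu : 2*(y*(1-y)) - x*(1-x) ≠ 0) :
    HasDerivAt (fo y K) (go y K x) x := by
  have hq : HasDerivAt (fun u : ℝ => K*(u-y)^2) (K*(2*(x-y))) x := by
    have h := (((hasDerivAt_id x).sub_const y).pow 2).const_mul K
    refine h.congr_deriv ?_
    simp only [id_eq]
    ring
  have hN : HasDerivAt (fun u : ℝ => (u*(1-u) - y*(1-y))^2)
      (2*(x*(1-x)-y*(1-y))*(1-2*x)) x := by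
    have h := ((hasDerivAt_A x).sub_const (y*(1-y))).pow 2
    refine h.congr_deriv ?_
    ring
  have hD : HasDerivAt (fun u : ℝ => 3*(2*(y*(1-y)) - u*(1-u))) (3*(-(1-2*x))) x := by
    have h := (((hasDerivAt_A x).const_sub (2*(y*(1-y))))).const_mul 3
    refine h.congr_deriv ?_
    try ring
  have hDne : 3*(2*(y*(1-y)) - x*(1-x)) ≠ 0 := mul_ne_zero three_ne_zero hu
  have h := ((hasDerivAt_ent y hx0 hx1).sub hq).sub (hN.div hD hDne)
  refine h.congr_deriv ?_
  unfold go
  field_simp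
  ring

lemma hasDerivAt_go (y K : ℝ) {x : ℝ} (hx0 : 0 < x) (hx1 : x < 1)
    (hu : 2*(y*(1-y)) - x*(1-x) ≠ 0) :
    HasDerivAt (go y K)
      (1/(x*(1-x)) - 2*K - 2/3 + 2*(y*(1-y))^2/(3*(2*(y*(1-y))-x*(1-x))^2)
        - 2*(y*(1-y))^2*(1-4*(x*(1-x)))/(3*(2*(y*(1-y))-x*(1-x))^3)) x := by
  have h1x : (0:ℝ) < 1 - x := by linarith
  have h12 := (Real.hasDerivAt_log hx0.ne').sub (hasDerivAt_log_one_sub hx1)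
  have hlin : HasDerivAt (fun u : ℝ => 2*K*(u-y)) (2*K) x := by
    have h := ((hasDerivAt_id x).sub_const y).const_mul (2*K)
    refine h.congr_deriv ?_
    try simp only [id_eq]
    try ring
  have hw : HasDerivAt (fun u : ℝ => 2*(y*(1-y)) - u*(1-u)) (-(1-2*x)) x :=
    (hasDerivAt_A x).const_sub (2*(y*(1-y)))
  have hN : HasDerivAt (fun u : ℝ => (1-2*u)*((y*(1-y))^2-(2*(y*(1-y))-u*(1-u))^2))
      ((-2)*((y*(1-y))^2-(2*(y*(1-y))-x*(1-x))^2)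
        + (1-2*x)*(-(2*(2*(y*(1-y))-x*(1-x))*(-(1-2*x))))) x := by
    have hsq : HasDerivAt (fun u : ℝ => (y*(1-y))^2-(2*(y*(1-y))-u*(1-u))^2)
        (-(2*(2*(y*(1-y))-x*(1-x))*(-(1-2*x)))) x := by
      have h := (hw.pow 2).const_sub ((y*(1-y))^2)
      refine h.congr_deriv ?_
      ring
    exact (hasDerivAt_one_sub_two x).mul hsq
  have hD : HasDerivAt (fun u : ℝ => 3*(2*(y*(1-y))-u*(1-u))^2)
      (3*(2*(2*(y*(1-y))-x*(1-x))*(-(1-2*x)))) x := by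
    have h := (hw.pow 2).const_mul 3
    refine h.congr_deriv ?_
    ring
  have hDne : 3*(2*(y*(1-y))-x*(1-x))^2 ≠ 0 :=
    mul_ne_zero three_ne_zero (pow_ne_zero 2 hu)
  have h := (((h12.sub_const (Real.log y)).add_const (Real.log (1-y))).sub hlin).sub
    (hN.div hD hDne)
  refine h.congr_deriv ?_
  have hu' : 2*y*(1-y) - x*(1-x) ≠ 0 := by rw [mul_assoc]; exact hu
  field_simp
  ring

set_option maxHeartbeats 1000000 in
lemma mid (y K : ℝ) (hy0 : 0 < y) (hy2 : y ≤ 1/2)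
    (hK1 : (1-2*y)*K = Real.log ((1-y)/y)) (hK2 : 2 ≤ K)
    (hK3 : 2*K ≤ 1/(3*(y*(1-y))) + 8/3)
    {x : ℝ} (hyx : y ≤ x) (hx2 : x ≤ 1/2) : 0 ≤ fm y K x := by
  have hy1 : y < 1 := by linarith
  have hx0 : 0 < x := lt_of_lt_of_le hy0 hyx
  have hx1 : x < 1 := by linarith
  have hb0 : 0 < y*(1-y) := by nlinarith
  have hc : (0:ℝ) < 6*K-2 := by linarith
  have h6 : 6*K*(y*(1-y)) ≤ 1 + 8*(y*(1-y)) := by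
    have e : (1/(3*(y*(1-y))) + 8/3)*(3*(y*(1-y))) = 1 + 8*(y*(1-y)) := by
      field_simp [sub_ne_zero.2 hy1.ne']
    have h := mul_le_mul_of_nonneg_right hK3 (by positivity : (0:ℝ) ≤ 3*(y*(1-y)))
    rw [e] at h
    linarith [h]
  have hpb : 0 ≤ -(6*K-2)*(y*(1-y))^3+3*(y*(1-y))^2+6*(y*(1-y))^2*(y*(1-y))-2*(y*(1-y))^2 := by
    nlinarith [mul_nonneg (mul_pos hb0 hb0).le
      (by linarith : (0:ℝ) ≤ 1 + 8*(y*(1-y)) - 6*K*(y*(1-y)))]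
  -- g is nonneg on [y, 1/2]
  have gnonneg : ∀ z, y ≤ z → z ≤ 1/2 → 0 ≤ gm y K z := by
    intro z hz1 hz2
    have hz0 : 0 < z := lt_of_lt_of_le hy0 hz1
    have hz1' : z < 1 := by linarith
    have hbz : y*(1-y) ≤ z*(1-z) := by nlinarith
    have gmy : gm y K y = 0 := by unfold gm; ring
    have gmh : gm y K (1/2) = 0 := by
      have hlog : Real.log ((1-y)/y) = Real.log (1-y) - Real.log y :=
        Real.log_div (by linarith) hy0.ne'
      have h2 : Real.log (1-y) - Real.log y = (1-2*y)*K := by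
        rw [hK1, hlog]
      unfold gm
      rw [show (1:ℝ) - 1/2 = 1/2 by norm_num]
      linear_combination h2
    by_cases hp : 0 ≤ -(6*K-2)*(z*(1-z))^3+3*(z*(1-z))^2
        +6*(y*(1-y))^2*(z*(1-z))-2*(y*(1-y))^2
    · have mono : MonotoneOn (gm y K) (Set.Icc y z) := by
        apply mono_of_hasDeriv (f' := fun w =>
          ((-(6*K-2)*(w*(1-w))^3 + 3*(w*(1-w))^2 + 6*(y*(1-y))^2*(w*(1-w)) - 2*(y*(1-y))^2)
            / (3*(w*(1-w))^3)))
        · intro w hw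
          exact hasDerivAt_gm y K (lt_of_lt_of_le hy0 hw.1) (by linarith [hw.2])
        · intro w hw
          have hw0 : 0 < w := lt_of_lt_of_le hy0 hw.1.le
          have hw2 : w < z := hw.2
          have haw1 : y*(1-y) ≤ w*(1-w) := by nlinarith [hw.1]
          have haw2 : w*(1-w) ≤ z*(1-z) := by nlinarith
          have hpw := pquasi hc hb0.le haw1 haw2 hpb hp
          apply div_nonneg hpw
          have := pow_pos (by nlinarith : (0:ℝ) < w*(1-w)) 3
          linarith
      have := mono (Set.left_mem_Icc.2 hz1) (Set.right_mem_Icc.2 hz1) hz1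
      rw [gmy] at this
      exact this
    · push_neg at hp
      have anti : AntitoneOn (gm y K) (Set.Icc z (1/2)) := by
        apply anti_of_hasDeriv (f' := fun w =>
          ((-(6*K-2)*(w*(1-w))^3 + 3*(w*(1-w))^2 + 6*(y*(1-y))^2*(w*(1-w)) - 2*(y*(1-y))^2)
            / (3*(w*(1-w))^3)))
        · intro w hw
          exact hasDerivAt_gm y K (lt_of_lt_of_le hz0 hw.1) (by linarith [hw.2])
        · intro w hw
          have hw0 : 0 < w := lt_of_lt_of_le hz0 hw.1.le
          have haw1 : z*(1-z) ≤ w*(1-w) := by nlinarith [hw.1, hw.2]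
          have hnum : -(6*K-2)*(w*(1-w))^3 + 3*(w*(1-w))^2
              + 6*(y*(1-y))^2*(w*(1-w)) - 2*(y*(1-y))^2 ≤ 0 := by
            by_contra hcon
            push_neg at hcon
            exact absurd (pquasi hc hb0.le hbz haw1 hpb hcon.le) (not_le.2 hp)
          apply div_nonpos_of_nonpos_of_nonneg hnum
          have hw1' : w < 1 := by linarith [hw.2]
          have := pow_pos (by nlinarith : (0:ℝ) < w*(1-w)) 3
          linarith
      have := anti (Set.left_mem_Icc.2 hz2) (Set.right_mem_Icc.2 hz2) hz2
      rw [gmh] at this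
      exact this
  have fmono : MonotoneOn (fm y K) (Set.Icc y x) := by
    apply mono_of_hasDeriv (f' := gm y K)
    · intro w hw
      exact hasDerivAt_fm y K (lt_of_lt_of_le hy0 hw.1) (by linarith [hw.2])
    · intro w hw
      exact gnonneg w hw.1.le (le_trans hw.2.le hx2)
  have fmy : fm y K y = 0 := by unfold fm; ring
  have := fmono (Set.left_mem_Icc.2 hyx) (Set.right_mem_Icc.2 hyx) hyx
  rw [fmy] at this
  exact this

set_option maxHeartbeats 1000000 in
lemma out (y K : ℝ) (hy0 : 0 < y) (hy2 : y ≤ 1/2)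
    (hK3 : 2*K ≤ 1/(3*(y*(1-y))) + 8/3)
    {x : ℝ} (hx0 : 0 < x) (hxy : x ≤ y) : 0 ≤ fo y K x := by
  have hy1 : y < 1 := by linarith
  have hb0 : 0 < y*(1-y) := by nlinarith
  have hb4 : y*(1-y) ≤ 1/4 := by nlinarith [sq_nonneg (1-2*y)]
  have goy : go y K y = 0 := by unfold go; ring
  have hune : ∀ w, x ≤ w → w ≤ y → 2*(y*(1-y)) - w*(1-w) ≠ 0 := by
    intro w hw1 hw2
    have hw0 : 0 < w := lt_of_lt_of_le hx0 hw1
    have haw : w*(1-w) ≤ y*(1-y) := by nlinarith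
    have : 0 < 2*(y*(1-y)) - w*(1-w) := by nlinarith
    exact this.ne'
  have gmono : MonotoneOn (go y K) (Set.Icc x y) := by
    apply mono_of_hasDeriv (f' := fun w =>
      (1/(w*(1-w)) - 2*K - 2/3 + 2*(y*(1-y))^2/(3*(2*(y*(1-y))-w*(1-w))^2)
        - 2*(y*(1-y))^2*(1-4*(w*(1-w)))/(3*(2*(y*(1-y))-w*(1-w))^3)))
    · intro w hw
      exact hasDerivAt_go y K (lt_of_lt_of_le hx0 hw.1) (by linarith [hw.2])
        (hune w hw.1 hw.2)
    · intro w hw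
      have hw0 : 0 < w := lt_of_lt_of_le hx0 hw.1.le
      have hw1 : w < 1 := by linarith [hw.2]
      have haw0 : 0 < w*(1-w) := by nlinarith
      have haw : w*(1-w) ≤ y*(1-y) := by nlinarith [hw.2]
      have key := Qout haw0 haw hb4
      linarith
  have gle : ∀ w ∈ Set.Ioo x y, go y K w ≤ 0 := by
    intro w hw
    have := gmono (Set.mem_Icc.2 ⟨hw.1.le, hw.2.le⟩) (Set.right_mem_Icc.2 (by linarith [hw.1, hw.2] : x ≤ y)) hw.2.le
    rw [goy] at this
    exact this
  have fanti : AntitoneOn (fo y K) (Set.Icc x y) := by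
    apply anti_of_hasDeriv (f' := go y K)
    · intro w hw
      exact hasDerivAt_fo y K (lt_of_lt_of_le hx0 hw.1) (by linarith [hw.2])
        (hune w hw.1 hw.2)
    · exact gle
  have foy : fo y K y = 0 := by unfold fo; ring
  have := fanti (Set.left_mem_Icc.2 hxy) (Set.right_mem_Icc.2 hxy) hxy
  rw [foy] at this
  exact this

set_option maxHeartbeats 1000000 in
lemma core (y K x : ℝ) (hy0 : 0 < y) (hy2 : y ≤ 1/2) (hx0 : 0 < x) (hx2 : x ≤ 1/2)
    (hK1 : (1-2*y)*K = Real.log ((1-y)/y)) (hK2 : 2 ≤ K)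
    (hK3 : 2*K ≤ 1/(3*(y*(1-y))) + 8/3) :
    x * Real.log (x / y) + (1 - x) * Real.log ((1 - x) / (1 - y)) ≥
      K * (x - y)^2 + (1/3) * (x * (1 - x) - y * (1 - y))^2 /
        (|x * (1 - x) - y * (1 - y)| + y * (1 - y)) := by
  have hy1 : y < 1 := by linarith
  have hx1 : x < 1 := by linarith
  have h1x : (0:ℝ) < 1 - x := by linarith
  have h1y : (0:ℝ) < 1 - y := by linarith
  rw [Real.log_div hx0.ne' hy0.ne', Real.log_div h1x.ne' h1y.ne']
  rcases le_total x y with h | h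
  · have habs : |x*(1-x) - y*(1-y)| = -(x*(1-x) - y*(1-y)) :=
      abs_of_nonpos (by nlinarith)
    rw [ge_iff_le, habs,
      show -(x*(1-x) - y*(1-y)) + y*(1-y) = 2*(y*(1-y)) - x*(1-x) from by ring,
      one_div_mul_eq_div, div_div, ← sub_nonneg]
    have key := out y K hy0 hy2 hK3 hx0 h
    convert key using 1
    unfold fo
    ring
  · have habs : |x*(1-x) - y*(1-y)| = x*(1-x) - y*(1-y) :=
      abs_of_nonneg (by nlinarith)
    rw [ge_iff_le, habs,
      show x*(1-x) - y*(1-y) + y*(1-y) = x*(1-x) from by ring,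
      one_div_mul_eq_div, div_div, ← sub_nonneg]
    have key := mid y K hy0 hy2 hK1 hK2 hK3 h hx2
    convert key using 1
    unfold fm
    ring

set_option maxHeartbeats 1000000 in
lemma half (x y : ℝ) (hx0 : 0 < x) (hx1 : x < 1) (hy0 : 0 < y) (hy2 : y ≤ 1/2) :
    x * Real.log (x / y) + (1 - x) * Real.log ((1 - x) / (1 - y)) ≥
      (if y = 1/2 then 2 else Real.log ((1 - y) / y) / (1 - 2 * y)) * (x - y)^2 +
        (1/3) * (x * (1 - x) - y * (1 - y))^2 /
          (|x * (1 - x) - y * (1 - y)| + y * (1 - y)) := by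
  have hy1 : y < 1 := by linarith
  have h1y : (0:ℝ) < 1 - y := by linarith
  set K := (if y = 1/2 then (2:ℝ) else Real.log ((1 - y) / y) / (1 - 2 * y)) with hKdef
  have hK1 : (1-2*y)*K = Real.log ((1-y)/y) := by
    by_cases hyh : y = 1/2
    · rw [hKdef, if_pos hyh, hyh]
      norm_num
    · have h12 : (0:ℝ) < 1 - 2*y := by
        rcases lt_or_eq_of_le hy2 with h | h
        · linarith
        · exact absurd h hyh
      rw [hKdef, if_neg hyh]
      field_simp
  have hK2 : 2 ≤ K := by
    by_cases hyh : y = 1/2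
    · rw [hKdef, if_pos hyh]
    · have h12 : (0:ℝ) < 1 - 2*y := by
        rcases lt_or_eq_of_le hy2 with h | h
        · linarith
        · exact absurd h hyh
      have ht : (1:ℝ) ≤ (1-y)/y := by
        rw [le_div_iff₀ hy0]
        linarith
      have hl := log_lower ht
      have e2 : 2*((1-y)/y-1)/((1-y)/y+1) = 2*(1-2*y) := by
        field_simp
        ring
      rw [hKdef, if_neg hyh, le_div_iff₀ h12]
      linarith
  have hK3 : 2*K ≤ 1/(3*(y*(1-y))) + 8/3 := by
    by_cases hyh : y = 1/2
    · rw [hKdef, if_pos hyh, hyh]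
      norm_num
    · have h12 : (0:ℝ) < 1 - 2*y := by
        rcases lt_or_eq_of_le hy2 with h | h
        · linarith
        · exact absurd h hyh
      have ht : (1:ℝ) ≤ (1-y)/y := by
        rw [le_div_iff₀ hy0]
        linarith
      have hupper := log_upper ht
      have e3 : ((1-y)/y-1)*(((1-y)/y)^2+10*((1-y)/y)+1)/(6*((1-y)/y)*((1-y)/y+1))*2
          = (1/(3*(y*(1-y))) + 8/3)*(1-2*y) := by
        field_simp
        ring
      rw [hKdef, if_neg hyh, show 2*(Real.log ((1-y)/y)/(1-2*y))
          = 2*Real.log ((1-y)/y)/(1-2*y) from (mul_div_assoc _ _ _).symm,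
        div_le_iff₀ h12]
      linarith
  rcases le_total x (1/2) with hx2 | hx2
  · exact core y K x hy0 hy2 hx0 hx2 hK1 hK2 hK3
  · have h' := core y K (1-x) hy0 hy2 (by linarith) (by linarith) hK1 hK2 hK3
    have e1 : (1:ℝ)-(1-x) = x := by ring
    rw [e1] at h'
    have e2 : (1-x)*x = x*(1-x) := by ring
    rw [e2] at h'
    have h1x : (0:ℝ) < 1 - x := by linarith
    rw [Real.log_div h1x.ne' hy0.ne', Real.log_div hx0.ne' h1y.ne'] at h'
    rw [Real.log_div hx0.ne' hy0.ne', Real.log_div h1x.ne' h1y.ne']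
    have hKlog : Real.log (1-y) - Real.log y = (1-2*y)*K := by
      have h := hK1
      rw [Real.log_div h1y.ne' hy0.ne'] at h
      linarith
    have hmul : (2*x-1)*(Real.log (1-y) - Real.log y - (1-2*y)*K) = 0 := by
      have h0 : Real.log (1-y) - Real.log y - (1-2*y)*K = 0 := by linarith
      rw [h0, mul_zero]
    nlinarith [h', hmul]

theorem stmt_0 (x y : ℝ) (hx0 : 0 < x) (hx1 : x < 1) (hy0 : 0 < y) (hy1 : y < 1) :
    x * Real.log (x / y) + (1 - x) * Real.log ((1 - x) / (1 - y)) ≥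
      (if y = 1/2 then 2 else Real.log ((1 - y) / y) / (1 - 2 * y)) * (x - y)^2 +
        (1/3) * (x * (1 - x) - y * (1 - y))^2 /
          (|x * (1 - x) - y * (1 - y)| + y * (1 - y)) := by
  rcases le_or_gt y (1/2) with hy2 | hy2
  · exact half x y hx0 hx1 hy0 hy2
  · have h' := half (1-x) (1-y) (by linarith) (by linarith) (by linarith) (by linarith)
    have e1 : (1:ℝ)-(1-x) = x := by ring
    have e2 : (1:ℝ)-(1-y) = y := by ring
    rw [e1, e2] at h'
    have eK : (if (1:ℝ)-y = 1/2 then (2:ℝ) else Real.log (y/(1-y))/(1-2*(1-y)))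
        = (if y = 1/2 then (2:ℝ) else Real.log ((1-y)/y)/(1-2*y)) := by
      by_cases hy' : y = 1/2
      · rw [if_pos (by rw [hy']; norm_num), if_pos hy']
      · rw [if_neg (fun hc => hy' (by linarith)), if_neg hy']
        have h1y : (0:ℝ) < 1 - y := by linarith
        rw [show y/(1-y) = ((1-y)/y)⁻¹ by rw [inv_div], Real.log_inv,
          show (1:ℝ)-2*(1-y) = -(1-2*y) from by ring, neg_div_neg_eq]
    rw [eK] at h'
    have e3 : (((1:ℝ)-x)-(1-y))^2 = (x-y)^2 := by ring
    have e4 : (1-x)*x = x*(1-x) := by ring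
    have e5 : (1-y)*y = y*(1-y) := by ring
    rw [e3, e4, e5] at h'
    linarith [h']
end

section
/- Define $g_1(z) = \frac{e^{2z} - 2z e^{z} - 1}{z^2(1+e^{z})^2}$ for $z \neq 0$. Then $g_1(z)/z > 0$ for all real $z \neq 0$; equivalently, $g_1(z) > 0$ for $z > 0$ and $g_1(z) < 0$ for $z < 0$. -/
theorem stmt_3 (z : ℝ) (hz : z ≠ 0) :
    (Real.exp (2 * z) - 2 * z * Real.exp z - 1) / (z^2 * (1 + Real.exp z)^2) / z > 0 := by
  have he := Real.exp_pos z
  have hnum : Real.exp (2 * z) - 2 * z * Real.exp z - 1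
      = 2 * Real.exp z * (Real.sinh z - z) := by
    rw [Real.sinh_eq, two_mul, Real.exp_add, Real.exp_neg]
    field_simp
    ring
  have hd : (0:ℝ) < z ^ 2 * (1 + Real.exp z) ^ 2 := by positivity
  rw [hnum]
  rcases lt_or_gt_of_ne hz with hlt | hgt
  · have h1 := Real.sinh_lt_self_iff.mpr hlt
    have h2 : 2 * Real.exp z * (Real.sinh z - z) < 0 := by nlinarith
    exact div_pos_of_neg_of_neg (div_neg_of_neg_of_pos h2 hd) hlt
  · have h1 := Real.self_lt_sinh_iff.mpr hgt
    have h2 : 0 < 2 * Real.exp z * (Real.sinh z - z) := by nlinarith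
    exact div_pos (div_pos h2 hd) hgt
end

section
/- For all $z > 0$ and $T > 0$, $\frac{\sqrt{z^2 + d}}{\tanh\left(\frac{\sqrt{z^2+d}}{2T}\right)} \leq \left(1 + \frac{d}{4T^2}\right)\frac{z}{\tanh\left(\frac{z}{2T}\right)}$ for any $d \geq 0$. -/
open Real Set

lemma sinh_le_mul_cosh {w : ℝ} (hw : 0 ≤ w) : Real.sinh w ≤ w * Real.cosh w := by
  have hmono : MonotoneOn (fun x : ℝ => x * Real.cosh x - Real.sinh x) (Set.Ici 0) := by
    apply monotoneOn_of_deriv_nonneg (convex_Ici 0)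
    · exact ((continuous_id.mul Real.continuous_cosh).sub Real.continuous_sinh).continuousOn
    · intro x hx
      exact (((hasDerivAt_id x).mul (Real.hasDerivAt_cosh x)).sub
        (Real.hasDerivAt_sinh x)).differentiableAt.differentiableWithinAt
    · intro x hx
      have hder : HasDerivAt (fun x : ℝ => x * Real.cosh x - Real.sinh x)
          (1 * Real.cosh x + x * Real.sinh x - Real.cosh x) x :=
        ((hasDerivAt_id x).mul (Real.hasDerivAt_cosh x)).sub (Real.hasDerivAt_sinh x)
      rw [hder.deriv]
      have hx0 : 0 ≤ x := le_of_lt (by simpa using hx)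
      have := Real.sinh_nonneg_iff.mpr hx0
      nlinarith
  have h0 : (0:ℝ) ∈ Set.Ici (0:ℝ) := Set.mem_Ici.mpr le_rfl
  have := hmono h0 (Set.mem_Ici.mpr hw) hw
  simp at this
  linarith

lemma key (a s : ℝ) (ha : 0 < a) (has : a ≤ s) :
    s / Real.tanh s ≤ (1 + s^2 - a^2) * (a / Real.tanh a) := by
  have hsinh : ∀ x : ℝ, 0 < x → 0 < Real.sinh x := fun x hx => Real.sinh_pos_iff.mpr hx
  set c : ℝ := a * Real.cosh a / Real.sinh a with hc
  have hsa : 0 < Real.sinh a := hsinh a ha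
  have hc1 : 1 ≤ c := by
    rw [hc, le_div_iff₀ hsa, one_mul]
    exact sinh_le_mul_cosh ha.le
  -- f x = (1 + x^2 - a^2) * c - x * cosh x / sinh x is monotone on Ici a
  have hmono : MonotoneOn
      (fun x : ℝ => (1 + x^2 - a^2) * c - x * Real.cosh x / Real.sinh x) (Set.Ici a) := by
    apply monotoneOn_of_deriv_nonneg (convex_Ici a)
    · apply ContinuousOn.sub
      · exact (Continuous.continuousOn (by continuity))
      · apply ContinuousOn.div
        · exact (continuous_id.mul Real.continuous_cosh).continuousOn
        · exact Real.continuous_sinh.continuousOn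
        · intro x hx
          exact (hsinh x (lt_of_lt_of_le ha hx)).ne'
    · intro x hx
      have hxa : a < x := by simpa using hx
      have hsx : Real.sinh x ≠ 0 := (hsinh x (ha.trans hxa)).ne'
      apply DifferentiableAt.differentiableWithinAt
      apply DifferentiableAt.sub
      · fun_prop
      · exact ((differentiableAt_id.mul Real.differentiable_cosh.differentiableAt).div
          Real.differentiable_sinh.differentiableAt hsx)
    · intro x hx
      have hxa : a < x := by simpa using hx
      have hx0 : 0 < x := ha.trans hxa
      have hsx : 0 < Real.sinh x := hsinh x hx0
      have hder : HasDerivAt (fun x : ℝ => (1 + x^2 - a^2) * c - x * Real.cosh x / Real.sinh x)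
          (((0 + 2 * x^1) - 0) * c -
            ((1 * Real.cosh x + x * Real.sinh x) * Real.sinh x -
              x * Real.cosh x * Real.cosh x) / (Real.sinh x)^2) x := by
        apply HasDerivAt.sub
        · exact (((hasDerivAt_const x 1).add ((hasDerivAt_pow 2 x))).sub
            (hasDerivAt_const x (a^2))).mul_const c
        · exact ((hasDerivAt_id x).mul (Real.hasDerivAt_cosh x)).div
            (Real.hasDerivAt_sinh x) hsx.ne'
      rw [hder.deriv]
      have hnum : (1 * Real.cosh x + x * Real.sinh x) * Real.sinh x -
          x * Real.cosh x * Real.cosh x = Real.cosh x * Real.sinh x - x := by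
        have := Real.cosh_sq_sub_sinh_sq x
        ring_nf
        nlinarith [Real.cosh_sq_sub_sinh_sq x]
      rw [hnum]
      -- need (cosh x sinh x - x)/sinh^2 ≤ 2x ≤ 2x*c
      have h2 : Real.sinh (2*x) ≤ (2*x) * Real.cosh (2*x) := sinh_le_mul_cosh (by linarith)
      have hs2 : Real.sinh (2*x) = 2 * Real.sinh x * Real.cosh x := Real.sinh_two_mul x
      have hc2 : Real.cosh (2*x) = 2 * (Real.sinh x)^2 + 1 := by
        rw [Real.cosh_two_mul]
        nlinarith [Real.cosh_sq_sub_sinh_sq x]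
      have hkey : Real.cosh x * Real.sinh x - x ≤ 2*x * (Real.sinh x)^2 := by
        rw [hs2, hc2] at h2; nlinarith
      have hdivle : (Real.cosh x * Real.sinh x - x) / (Real.sinh x)^2 ≤ 2*x := by
        rw [div_le_iff₀ (by positivity)]; nlinarith
      have hcle : 2*x ≤ 2*x*c := by nlinarith
      simp only [pow_one]
      nlinarith
  have hres := hmono (Set.self_mem_Ici) (Set.mem_Ici.mpr has) has
  have hss : 0 < Real.sinh s := hsinh s (ha.trans_le has)
  have hca : 0 < Real.cosh a := Real.cosh_pos a
  have hcs : 0 < Real.cosh s := Real.cosh_pos s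
  have e1 : a / Real.tanh a = a * Real.cosh a / Real.sinh a := by
    rw [Real.tanh_eq_sinh_div_cosh]; field_simp
  have e2 : s / Real.tanh s = s * Real.cosh s / Real.sinh s := by
    rw [Real.tanh_eq_sinh_div_cosh]; field_simp
  rw [e1, e2]
  simp only at hres
  nlinarith [hres]

theorem stmt_18 (z T d : ℝ) (hz : 0 < z) (hT : 0 < T) (hd : 0 ≤ d) :
    Real.sqrt (z^2 + d) / Real.tanh (Real.sqrt (z^2 + d) / (2 * T)) ≤
      (1 + d / (4 * T^2)) * (z / Real.tanh (z / (2 * T))) := by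
  set a := z / (2 * T) with hadef
  set s := Real.sqrt (z^2 + d) / (2 * T) with hsdef
  have h2T : 0 < 2 * T := by linarith
  have ha : 0 < a := div_pos hz h2T
  have hzs : z ≤ Real.sqrt (z^2 + d) := by
    nth_rewrite 1 [show z = Real.sqrt (z^2) by rw [Real.sqrt_sq hz.le]]
    exact Real.sqrt_le_sqrt (by nlinarith)
  have has : a ≤ s := by
    rw [hadef, hsdef]
    exact div_le_div_of_nonneg_right hzs h2T.le
  have hsq : s^2 - a^2 = d / (4 * T^2) := by
    rw [hsdef, hadef, div_pow, div_pow, Real.sq_sqrt (by positivity)]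
    field_simp
    ring
  have hk := key a s ha has
  have hk' : s / Real.tanh s ≤ (1 + d / (4 * T^2)) * (a / Real.tanh a) := by
    have h : 1 + s^2 - a^2 = 1 + d / (4 * T^2) := by rw [← hsq]; ring
    rwa [h] at hk
  have e1 : Real.sqrt (z^2 + d) = s * (2 * T) := by rw [hsdef]; field_simp
  have e2 : z = a * (2 * T) := by rw [hadef]; field_simp
  calc Real.sqrt (z^2 + d) / Real.tanh s
      = (2 * T) * (s / Real.tanh s) := by rw [e1]; ring
    _ ≤ (2 * T) * ((1 + d / (4 * T^2)) * (a / Real.tanh a)) :=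
        mul_le_mul_of_nonneg_left hk' h2T.le
    _ = (1 + d / (4 * T^2)) * (z / Real.tanh a) := by rw [e2]; ring
end
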